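/- Let f : ℕ → ℕ → ℝ → ℝ be such that for fixed x, y the map s ↦ f(x, y, s) is strictly decreasing on the positive reals and takes positive values there. Let x, y ∈ ℕ, let s, Δ > 0 be reals, let a > 0 be a natural number with a · f(x, y, s) = 1, and let M be a natural number with M ≤ a and M · f(x, y, Δ) ≥ 1. Then s ≥ Δ. -/
import Mathlib

/-- if `s ↦ f x y s` is strictly decreasing and positive on the
positive reals, `a·f(x,y,s) = 1` with `a > 0`, `M ≤ a` and `M·f(x,y,Δ) ≥ 1`,
then `s ≥ Δ`. -/
theorem deterministic_report_correct
    (f : ℕ → ℕ → ℝ → ℝ)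
    (hmono : ∀ x y : ℕ, StrictAntiOn (f x y) (Set.Ioi (0 : ℝ)))
    (hpos : ∀ (x y : ℕ) (s : ℝ), 0 < s → 0 < f x y s)
    (x y : ℕ) (s Δ : ℝ) (hs : 0 < s) (hΔ : 0 < Δ)
    (a : ℕ) (ha : 0 < a) (hafs : (a : ℝ) * f x y s = 1)
    (M : ℕ) (hMa : M ≤ a) (hMf : 1 ≤ (M : ℝ) * f x y Δ) :
    Δ ≤ s := by
  have hM : 0 < M := by
    by_contra h
    push_neg at h
    interval_cases M
    simp at hMf
    linarith
  have hMR : (0:ℝ) < M := by exact_mod_cast hM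
  have hfs : 0 < f x y s := hpos x y s hs
  have haM : (M:ℝ) ≤ a := by exact_mod_cast hMa
  have h1 : (M:ℝ) * f x y s ≤ 1 := by
    calc (M:ℝ) * f x y s ≤ (a:ℝ) * f x y s := by nlinarith
    _ = 1 := hafs
  have hge : f x y s ≤ f x y Δ := by
    have := le_trans h1 hMf
    nlinarith
  by_contra h
  push_neg at h
  have := hmono x y (Set.mem_Ioi.mpr hs) (Set.mem_Ioi.mpr hΔ) h
  linarith
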